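/- Define g(x) = 1/log(1 + 1/x) for real x ≥ 1. Then g is strictly increasing on [1, ∞); for all x ≥ 1, x + 1/2 − 1/x ≤ g(x) < x + 1/2; and for all y ≥ x ≥ 1, y − x − 1/y < g(y) − g(x) < y − x + 1/x. -/

import Mathlib

/-- `g x = 1 / log (1 + 1/x)`. -/
noncomputable def g (x : ℝ) : ℝ := 1 / Real.log (1 + 1 / x)

lemma hasDeriv_f (x : ℝ) (hx : (0:ℝ) < x) :
    HasDerivAt (fun t : ℝ => Real.log (1+t) - 2*t/(2+t))
      (1/(1+x) - 4/(2+x)^2) x := by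
  have h1 : HasDerivAt (fun t : ℝ => Real.log (1+t)) (1/(1+x)) x := by
    have h : HasDerivAt (fun t : ℝ => 1+t) 1 x := (hasDerivAt_id x).const_add 1
    simpa using h.log (by positivity)
  have h2 : HasDerivAt (fun t : ℝ => 2*t/(2+t)) (4/(2+x)^2) x := by
    have hn : HasDerivAt (fun t : ℝ => 2*t) 2 x := by
      simpa using (hasDerivAt_id x).const_mul 2
    have hd : HasDerivAt (fun t : ℝ => 2+t) 1 x := (hasDerivAt_id x).const_add 2
    have h := hn.div hd (by positivity)
    exact h.congr_deriv (by ring)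
  exact h1.sub h2

lemma logA (t : ℝ) (ht : 0 < t) : 2*t/(2+t) < Real.log (1+t) := by
  have key : StrictMonoOn (fun t : ℝ => Real.log (1+t) - 2*t/(2+t)) (Set.Ici 0) := by
    apply strictMonoOn_of_deriv_pos (convex_Ici 0)
    · apply ContinuousOn.sub
      · apply ContinuousOn.log (by fun_prop)
        intro x hx
        simp only [Set.mem_Ici] at hx
        positivity
      · apply ContinuousOn.div (by fun_prop) (by fun_prop)
        intro x hx
        simp only [Set.mem_Ici] at hx
        positivity
    · intro x hx
      rw [interior_Ici] at hx
      have hx : (0:ℝ) < x := hx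
      rw [(hasDeriv_f x hx).deriv]
      rw [sub_pos, div_lt_div_iff₀ (by positivity) (by positivity)]
      nlinarith
  have h0 := key (Set.self_mem_Ici) (Set.mem_Ici.mpr ht.le) ht
  simp only [Real.log_one, add_zero, mul_zero, zero_div, sub_zero] at h0
  norm_num at h0
  linarith

lemma hasDeriv_psi (x : ℝ) (hx0 : 0 < x) (hx1 : x < 1) :
    HasDerivAt (fun t : ℝ => t/(1 + t/2 - t^2) - Real.log (1+t))
      ((1+x^2)/(1 + x/2 - x^2)^2 - 1/(1+x)) x := by
  have hq : (0:ℝ) < 1 + x/2 - x^2 := by nlinarith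
  have h1 : HasDerivAt (fun t : ℝ => t/(1 + t/2 - t^2))
      ((1+x^2)/(1 + x/2 - x^2)^2) x := by
    have hn : HasDerivAt (fun t : ℝ => t) 1 x := hasDerivAt_id x
    have hd : HasDerivAt (fun t : ℝ => 1 + t/2 - t^2) (1/2 - 2*x) x := by
      have h1 : HasDerivAt (fun t : ℝ => t/2) (1/2) x := by
        simpa using (hasDerivAt_id x).div_const 2
      have h2 : HasDerivAt (fun t : ℝ => t^2) (2*x) x := by
        simpa using hasDerivAt_pow 2 x
      exact (h1.const_add 1).sub h2
    have h := hn.div hd (ne_of_gt hq)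
    exact h.congr_deriv (by ring)
  have h2 : HasDerivAt (fun t : ℝ => Real.log (1+t)) (1/(1+x)) x := by
    have h : HasDerivAt (fun t : ℝ => 1+t) 1 x := (hasDerivAt_id x).const_add 1
    simpa using h.log (by positivity)
  exact h1.sub h2

lemma logB (t : ℝ) (ht : 0 < t) (ht1 : t ≤ 1) :
    Real.log (1+t) ≤ t/(1 + t/2 - t^2) := by
  have key : MonotoneOn (fun t : ℝ => t/(1 + t/2 - t^2) - Real.log (1+t))
      (Set.Icc 0 1) := by
    apply monotoneOn_of_deriv_nonneg (convex_Icc 0 1)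
    · apply ContinuousOn.sub
      · apply ContinuousOn.div (by fun_prop) (by fun_prop)
        intro x hx
        obtain ⟨h0, h1⟩ := hx
        nlinarith
      · apply ContinuousOn.log (by fun_prop)
        intro x hx
        obtain ⟨h0, h1⟩ := hx
        positivity
    · rw [interior_Icc]
      intro x hx
      obtain ⟨h0, h1⟩ := hx
      exact ((hasDeriv_psi x h0 h1).differentiableAt).differentiableWithinAt
    · rw [interior_Icc]
      intro x hx
      obtain ⟨h0, h1⟩ := hx
      rw [(hasDeriv_psi x h0 h1).deriv]
      have hq : (0:ℝ) < 1 + x/2 - x^2 := by nlinarith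
      rw [sub_nonneg, div_le_div_iff₀ (by positivity) (by positivity)]
      nlinarith
  have h0 := key (Set.mem_Icc.mpr ⟨le_refl 0, zero_le_one⟩)
      (Set.mem_Icc.mpr ⟨ht.le, ht1⟩) ht.le
  simp only [Real.log_one, add_zero, zero_div, sub_zero] at h0
  norm_num at h0
  linarith

theorem stmt_19 :
    StrictMonoOn g (Set.Ici (1 : ℝ)) ∧
    (∀ x : ℝ, 1 ≤ x → x + 1 / 2 - 1 / x ≤ g x ∧ g x < x + 1 / 2) ∧
    (∀ x y : ℝ, 1 ≤ x → x ≤ y →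
      y - x - 1 / y < g y - g x ∧ g y - g x < y - x + 1 / x) := by
  have hbound : ∀ x : ℝ, 1 ≤ x → x + 1 / 2 - 1 / x ≤ g x ∧ g x < x + 1 / 2 := by
    intro x hx
    have hx0 : (0:ℝ) < x := by linarith
    have ht : (0:ℝ) < 1/x := by positivity
    have ht1 : 1/x ≤ 1 := by
      rw [div_le_one hx0]; exact hx
    have hlpos : 0 < Real.log (1 + 1/x) := Real.log_pos (by linarith)
    constructor
    · -- lower bound
      have hB := logB (1/x) ht ht1
      have ht2 : (1/x)^2 ≤ 1/x := by nlinarith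
      have hq1 : (0:ℝ) < 1 + (1/x)/2 - (1/x)^2 := by nlinarith
      have hpos : (0:ℝ) < x + 1/2 - 1/x := by linarith
      have heq : (1/x)/(1 + (1/x)/2 - (1/x)^2) = 1/(x + 1/2 - 1/x) := by
        rw [div_eq_div_iff hq1.ne' hpos.ne']
        field_simp
      rw [heq] at hB
      have := one_div_le_one_div_of_le hlpos hB
      rw [one_div_one_div] at this
      unfold g
      linarith
    · -- upper bound
      have hA := logA (1/x) ht
      have heq : 2*(1/x)/(2 + 1/x) = 1/(x + 1/2) := by
        rw [div_eq_div_iff (by positivity) (by positivity)]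
        field_simp
      rw [heq] at hA
      have := one_div_lt_one_div_of_lt (by positivity) hA
      rw [one_div_one_div] at this
      unfold g
      linarith
  refine ⟨?_, hbound, ?_⟩
  · intro a ha b hb hab
    simp only [Set.mem_Ici] at ha hb
    have ha0 : (0:ℝ) < a := by linarith
    have hb0 : (0:ℝ) < b := by linarith
    have hlb : 0 < Real.log (1 + 1/b) := Real.log_pos (by
      have : (0:ℝ) < 1/b := by positivity
      linarith)
    have hll : Real.log (1 + 1/b) < Real.log (1 + 1/a) := by
      apply Real.log_lt_log
      · have : (0:ℝ) < 1/b := by positivity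
        linarith
      · have : 1/b < 1/a := one_div_lt_one_div_of_lt ha0 hab
        linarith
    unfold g
    exact one_div_lt_one_div_of_lt hlb hll
  · intro x y hx hxy
    have hy : (1:ℝ) ≤ y := le_trans hx hxy
    obtain ⟨hxl, hxu⟩ := hbound x hx
    obtain ⟨hyl, hyu⟩ := hbound y hy
    constructor
    · linarith
    · linarith
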